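/- Let G = (V,E) be a finite simple strongly connected directed graph. For any directed path π in G starting at a vertex v and any oriented spanning tree 𝐚 of G rooted at v, there exists a unique directed path in the tree graph 𝒯G starting at 𝐚 whose projection under p is π; in other words, 𝒯G is a covering graph of G. -/

import Mathlib

open Classical Finset

noncomputable section

variable {V : Type*} {R : Type*} [CommRing R]

/-- An oriented spanning tree of the digraph `E` on `V`: `root` has outdegree 0
(convention `out root = root`), every other vertex `v` has a unique outgoing edge
`(v, out v)` which is an edge of the graph, and iterating `out` from any vertex
reaches the root (no cycles). -/
structure SpTree [Fintype V] (E : V → V → Prop) where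
  root : V
  out : V → V
  out_root : out root = root
  edge_mem : ∀ v, v ≠ root → E v (out v)
  reach : ∀ v, ∃ n, out^[n] v = root

theorem SpTree.ext' [Fintype V] {E : V → V → Prop} {a b : SpTree E}
    (h1 : a.root = b.root) (h2 : a.out = b.out) : a = b := by
  cases a; cases b; dsimp at h1 h2; subst h1; subst h2; rfl

noncomputable instance [Fintype V] (E : V → V → Prop) : Fintype (SpTree E) :=
  Fintype.ofInjective (fun a => (a.root, a.out)) fun a b h =>
    SpTree.ext' (congrArg Prod.fst h) (congrArg Prod.snd h)

/-- An oriented forest of the digraph `E`, rooted in the set `U`. -/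
structure SpForest [Fintype V] (E : V → V → Prop) (U : Finset V) where
  out : V → V
  out_root : ∀ v ∈ U, out v = v
  edge_mem : ∀ v, v ∉ U → E v (out v)
  reach : ∀ v, ∃ n, out^[n] v ∈ U

theorem SpForest.ext' [Fintype V] {E : V → V → Prop} {U : Finset V} {a b : SpForest E U}
    (h : a.out = b.out) : a = b := by
  cases a; cases b; dsimp at h; subst h; rfl

noncomputable instance [Fintype V] (E : V → V → Prop) (U : Finset V) :
    Fintype (SpForest E U) :=
  Fintype.ofInjective SpForest.out fun _ _ h => SpForest.ext' h

/-- The adjacency relation of the tree graph `𝒯G`: there is an edge from `a` to `b`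
if `b` is obtained from `a` by adding the edge `(a.root, b.root)` of `G` and deleting
the edge of `a` going out of `b.root`. -/
def TStep [Fintype V] (E : V → V → Prop) (a b : SpTree E) : Prop :=
  E a.root b.root ∧ a.root ≠ b.root ∧ b.out a.root = b.root ∧
    ∀ v, v ≠ a.root → v ≠ b.root → b.out v = a.out v

/-- The set `W` is strongly connected in the digraph `E` (for the induced subgraph). -/
def SConn (E : V → V → Prop) (W : Set V) : Prop :=
  ∀ u ∈ W, ∀ v ∈ W, Relation.ReflTransGen (fun a b => E a b ∧ a ∈ W ∧ b ∈ W) u v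

/-- Edge-weighted Laplacian matrix of the digraph `E`, with weight `x (v,w)` on the
edge from `v` to `w`. -/
def lapM [Fintype V] (E : V → V → Prop) (x : V × V → R) : Matrix V V R :=
  Matrix.of fun v w =>
    if v = w then -(∑ u ∈ univ.filter (fun u => E v u), x (v, u))
    else if E v w then x (v, w) else 0

/-- Schrödinger operator `L = Q + Y` with potential `y`. -/
def schrM [Fintype V] (E : V → V → Prop) (x : V × V → R) (y : V → R) : Matrix V V R :=
  lapM E x + Matrix.diagonal y

/-- Weighted adjacency matrix. -/
def adjM [Fintype V] (E : V → V → Prop) (x : V × V → R) : Matrix V V R :=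
  Matrix.of fun v w => if E v w then x (v, w) else 0

/-- Submatrix keeping rows and columns indexed by `W`. -/
def subM [Fintype V] (M : Matrix V V R) (W : Finset V) :
    Matrix {v // v ∈ W} {v // v ∈ W} R :=
  M.submatrix Subtype.val Subtype.val

/-- The lifted edge weights on the tree graph: the edge from `a` to `b` in `𝒯G`
carries the weight of the edge of `G` from `a.root` to `b.root`. -/
def xT [Fintype V] (E : V → V → Prop) (x : V × V → R) : SpTree E × SpTree E → R :=
  fun p => x (p.1.root, p.2.root)

/-- The lifted potential on the tree graph. -/
def yT [Fintype V] (E : V → V → Prop) (y : V → R) : SpTree E → R :=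
  fun a => y a.root

/-- Weight `π_𝐚` of a spanning tree: product of its edge weights. -/
def treeWt [Fintype V] {E : V → V → Prop} (x : V × V → R) (a : SpTree E) : R :=
  ∏ v ∈ univ.filter (fun v => v ≠ a.root), x (v, a.out v)

/-- Generating polynomial of the oriented spanning trees of `E`. -/
def FGpoly [Fintype V] (E : V → V → Prop) (x : V × V → R) : R :=
  ∑ a : SpTree E, treeWt x a

/-- Weight `π_𝐟` of a forest: product of its edge weights. -/
def forestWt [Fintype V] {E : V → V → Prop} {U : Finset V} (x : V × V → R)
    (f : SpForest E U) : R :=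
  ∏ v ∈ univ.filter (fun v => v ∉ U), x (v, f.out v)

/-- Generating polynomial `Ψ_U` of the oriented forests of `E` rooted in `U`. -/
def PsiF [Fintype V] (E : V → V → Prop) (U : Finset V) (x : V × V → R) : R :=
  ∑ f : SpForest E U, forestWt x f

/-- Generating polynomial of the oriented spanning trees of the tree graph `𝒯G`. -/
def FTGpoly [Fintype V] (E : V → V → Prop) (x : V × V → R) : R :=
  FGpoly (TStep E) (xT E x)

/-- The polynomial ring `ℂ[x_e (e ∈ V × V), y_v (v ∈ V)]`. -/
abbrev Rng (V : Type*) := MvPolynomial ((V × V) ⊕ V) ℂ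

/-- The edge variable `x_e`. -/
def xv {V : Type*} : V × V → Rng V := fun e => MvPolynomial.X (Sum.inl e)

/-- The vertex variable `y_v`. -/
def yv {V : Type*} : V → Rng V := fun v => MvPolynomial.X (Sum.inr v)

/-! ### The exploration algorithm -/

/-- The state of the exploration algorithm: a set `A` of explored vertices, a FIFO
list `Lq` of edges to be examined, a reservoir `F` of edges, and the set `Er` of
erased vertices. -/
structure ExpState (V : Type*) where
  A : Finset V
  Lq : List (V × V)
  F : Finset (V × V)
  Er : Finset V

/-- The list of the edges of `S` with target `w`, ordered by increasing source. -/
def sortedTo (ord : LinearOrder V) (S : Finset (V × V)) (w : V) : List (V × V) :=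
  letI := ord
  (((S.filter (fun f => f.2 = w)).image Prod.fst).sort (· ≤ ·)).map fun u => (u, w)

/-- The edge `e` belongs to the tree `a`. -/
def inTree [Fintype V] {E : V → V → Prop} (a : SpTree E) (e : V × V) : Prop :=
  e.1 ≠ a.root ∧ a.out e.1 = e.2

/-- One iteration of the exploration algorithm: pick the first edge `e` of the list,
with source `w`; if `e` belongs to the tree then add `w` to `A`, delete all edges with
source `w` from the list, and append the edges of `F` with target `w` by increasing
source; otherwise erase `w`, deleting all edges with source or target `w` from the
list and from `F`. -/
def expStep [Fintype V] {E : V → V → Prop} (ord : LinearOrder V) (a : SpTree E)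
    (s : ExpState V) : ExpState V :=
  match s.Lq with
  | [] => s
  | e :: rest =>
    if inTree a e then
      { A := insert e.1 s.A
        Lq := rest.filter (fun f => decide (f.1 ≠ e.1)) ++ sortedTo ord s.F e.1
        F := s.F
        Er := s.Er }
    else
      { A := s.A
        Lq := rest.filter (fun f => decide (f.1 ≠ e.1 ∧ f.2 ≠ e.1))
        F := s.F.filter (fun f => f.1 ≠ e.1 ∧ f.2 ≠ e.1)
        Er := insert e.1 s.Er }

/-- The initial state of the exploration algorithm run on a tree rooted at `v`:
`A = {v}`, the list consists of the edges with target `v` by increasing source, and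
`F` is the set of edges with source `≠ v`. -/
def expInit [Fintype V] {E : V → V → Prop} (ord : LinearOrder V) (a : SpTree E) :
    ExpState V :=
  letI := ord
  { A := {a.root}
    Lq := ((univ.filter (fun u => E u a.root)).sort (· ≤ ·)).map fun u => (u, a.root)
    F := univ.filter fun f : V × V => E f.1 f.2 ∧ f.1 ≠ a.root
    Er := (∅ : Finset V) }

/-- The final state of the exploration algorithm (the number of iterations below is
large enough for the list to be exhausted, after which the state no longer moves). -/
def expRun [Fintype V] {E : V → V → Prop} (ord : LinearOrder V) (a : SpTree E) :
    ExpState V :=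
  (expStep ord a)^[2 * Fintype.card (V × V) + 1] (expInit ord a)

/-- The set `φ(𝐚)` of explored vertices. -/
def expPhi [Fintype V] {E : V → V → Prop} (ord : LinearOrder V) (a : SpTree E) : Finset V :=
  (expRun ord a).A

/-- The set of erased vertices. -/
def expEr [Fintype V] {E : V → V → Prop} (ord : LinearOrder V) (a : SpTree E) : Finset V :=
  (expRun ord a).Er

/-- The set `ψ(𝐚)`: the strongly connected component of the root in the subgraph
induced on `φ(𝐚)`. -/
def expPsi [Fintype V] {E : V → V → Prop} (ord : LinearOrder V) (a : SpTree E) : Finset V :=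
  univ.filter fun u => u ∈ expPhi ord a ∧
    Relation.ReflTransGen
      (fun p q => E p q ∧ p ∈ expPhi ord a ∧ q ∈ expPhi ord a) a.root u ∧
    Relation.ReflTransGen
      (fun p q => E p q ∧ p ∈ expPhi ord a ∧ q ∈ expPhi ord a) u a.root

/-- The multiplicity `m(W, w)`: the number of oriented spanning trees `𝐚` rooted at
`w` with `ψ(𝐚) = W`. -/
def multCount [Fintype V] (E : V → V → Prop) (ord : LinearOrder V) (W : Finset V)
    (w : V) : ℕ :=
  Nat.card {a : SpTree E // a.root = w ∧ expPsi ord a = W}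

/-- The multiplicity `m(W)` (the common value of the `m(W, w)`, `w ∈ W`). -/
def multW [Fintype V] (E : V → V → Prop) (ord : LinearOrder V) (W : Finset V) : ℕ :=
  letI := ord
  if h : W.Nonempty then multCount E ord W (W.min' h) else 0

end

theorem lift_step {V : Type} [Fintype V] {E : V → V → Prop} (a : SpTree E) (w : V)
    (hE : E a.root w) (hne : a.root ≠ w) :
    ∃! b : SpTree E, TStep E a b ∧ b.root = w := by
  classical
  set g : V → V := fun v => if v = w ∨ v = a.root then w else a.out v with hg
  have hgdef : ∀ v, g v = if v = w ∨ v = a.root then w else a.out v := fun _ => rfl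
  have hreach : ∀ v, ∃ m, g^[m] v = w := by
    intro v
    obtain ⟨n, hn⟩ := a.reach v
    induction n generalizing v with
    | zero =>
      simp only [Function.iterate_zero, id_eq] at hn
      exact ⟨1, by simp [hgdef, hn]⟩
    | succ n ih =>
      by_cases h1 : v = w
      · exact ⟨0, h1⟩
      by_cases h2 : v = a.root
      · exact ⟨1, by simp [hgdef, h2]⟩
      · rw [Function.iterate_succ_apply] at hn
        obtain ⟨m, hm⟩ := ih (a.out v) hn
        refine ⟨m + 1, ?_⟩
        rw [Function.iterate_succ_apply]
        have : g v = a.out v := by rw [hgdef]; simp [h1, h2]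
        rw [this]; exact hm
  have hedge : ∀ v, v ≠ w → E v (g v) := by
    intro v hv
    by_cases h2 : v = a.root
    · have : g v = w := by rw [hgdef]; simp [h2]
      rw [this]; rw [h2]; exact hE
    · have : g v = a.out v := by rw [hgdef]; simp [hv, h2]
      rw [this]; exact a.edge_mem v h2
  refine ⟨⟨w, g, by simp [hgdef], hedge, hreach⟩, ⟨⟨hE, hne, ?_, ?_⟩, rfl⟩, ?_⟩
  · show g a.root = w; rw [hgdef]; simp
  · intro v hv1 hv2
    show g v = a.out v
    rw [hgdef]; simp [hv1, hv2]
  · rintro b ⟨⟨hE', hne', hba, hothers⟩, hroot⟩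
    refine SpTree.ext' hroot ?_
    funext v
    show b.out v = g v
    rw [hgdef]
    by_cases h1 : v = w
    · subst h1; rw [if_pos (Or.inl rfl), ← hroot, b.out_root]
    by_cases h2 : v = a.root
    · subst h2; rw [if_pos (Or.inr rfl), hba]; exact hroot
    · rw [if_neg (by tauto)]
      exact hothers v h2 (by rw [hroot]; exact h1)

/-- The tree graph is a covering graph of `G`: every directed path
of `G` (encoded as the list of its vertices) starting at the root of an oriented
spanning tree `𝐚` lifts to a unique directed path of `𝒯G` starting at `𝐚` whose
projection (vertexwise, by taking roots) is the given path. -/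
theorem statement5 {V : Type} [Fintype V] (E : V → V → Prop)
    (hsimple : ∀ v, ¬ E v v) (hsc : SConn E Set.univ)
    (l : List V) (hl : l.Chain' E) (a : SpTree E) (hstart : l.head? = some a.root) :
    ∃! L : List (SpTree E),
      L.Chain' (TStep E) ∧ L.head? = some a ∧ L.map SpTree.root = l := by
  classical
  induction l generalizing a with
  | nil => simp at hstart
  | cons v l' ih =>
    have hv : v = a.root := by simpa using hstart
    subst hv
    cases l' with
    | nil =>
      refine ⟨[a], ⟨List.isChain_singleton a, by simp, by simp⟩, ?_⟩
      rintro M ⟨hc, hh, hm⟩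
      cases M with
      | nil => simp at hh
      | cons m t =>
        have hma : m = a := by simpa using hh
        subst hma
        cases t with
        | nil => rfl
        | cons b t' => simp at hm
    | cons w l'' =>
      have hEvw : E a.root w := (List.isChain_cons_cons.1 hl).1
      have hne : a.root ≠ w := fun h => hsimple w (h ▸ hEvw)
      obtain ⟨b, ⟨hTb, hbroot⟩, hbuniq⟩ := lift_step a w hEvw hne
      obtain ⟨L', ⟨hc', hh', hm'⟩, huniq'⟩ :=
        ih (List.isChain_cons_cons.1 hl).2 b (by simp [hbroot])
      refine ⟨a :: L', ⟨?_, by simp, by simp [hm']⟩, ?_⟩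
      · rw [List.Chain', List.isChain_cons]
        refine ⟨fun y hy => ?_, hc'⟩
        have : b = y := by rw [hh'] at hy; simpa using hy
        rw [← this]; exact hTb
      · rintro M ⟨hc, hh, hm⟩
        cases M with
        | nil => simp at hh
        | cons m t =>
          have hma : a = m := by have := hh; simp at this; exact this.symm
          subst hma
          cases t with
          | nil => simp at hm
          | cons b' t' =>
            have hb'root : b'.root = w := by
              simp only [List.map_cons, List.cons.injEq] at hm
              exact hm.2.1
            have hTb' : TStep E a b' := (List.isChain_cons_cons.1 hc).1
            have hb'b : b' = b := hbuniq b' ⟨hTb', hb'root⟩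
            subst hb'b
            have : b' :: t' = L' := by
              refine huniq' _ ⟨(List.isChain_cons_cons.1 hc).2, by simp, ?_⟩
              simpa using hm
            rw [this]
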